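/- For τ ≥ 0 and every natural number k, the Chebyshev coefficient c_k(τ) = (2/π)∫₀^π cos(kθ) exp(−τ(cos θ+1)) dθ satisfies |c_k(τ)| ≤ 2 (τ/2)^k exp(−τ) cosh(τ) / k!. -/

import Mathlib

/-- The `k`-th Chebyshev coefficient of `t ↦ exp (-τ (t+1))` on `[-1,1]`. -/
noncomputable def chebCoeff (τ : ℝ) (k : ℕ) : ℝ :=
  (2 / Real.pi) * ∫ θ in (0:ℝ)..Real.pi,
    Real.cos (k * θ) * Real.exp (-τ * (Real.cos θ + 1))

open Real MeasureTheory

noncomputable def Jval (n k : ℕ) : ℝ :=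
  if k ≤ n ∧ (n - k) % 2 = 0 then Real.pi / 2 ^ n * (n.choose ((n - k) / 2) : ℝ) else 0

noncomputable def Jint (n k : ℕ) : ℝ :=
  ∫ θ in (0:ℝ)..Real.pi, Real.cos (k * θ) * Real.cos θ ^ n

lemma Jval_rec0 (n : ℕ) : Jval (n + 1) 0 = Jval n 1 := by
  unfold Jval
  rcases Nat.even_or_odd n with ⟨m, hm⟩ | ⟨m, hm⟩
  · subst hm
    rw [if_neg (by omega), if_neg (by omega)]
  · subst hm
    rw [if_pos (by omega), if_pos (by omega)]
    have h1 : (2 * m + 1 + 1 - 0) / 2 = m + 1 := by omega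
    have h2 : (2 * m + 1 - 1) / 2 = m := by omega
    rw [h1, h2]
    have hpascal : (2 * m + 1 + 1).choose (m + 1) = (2 * m + 1).choose m + (2 * m + 1).choose (m + 1) :=
      Nat.choose_succ_succ' (2 * m + 1) m ▸ by
        rw [Nat.choose_succ_succ]
    have hsymm : (2 * m + 1).choose (m + 1) = (2 * m + 1).choose m := Nat.choose_symm_half m
    rw [hpascal, hsymm]
    push_cast
    ring

lemma Jval_recS (n j : ℕ) : Jval (n + 1) (j + 1) = (Jval n (j + 2) + Jval n j) / 2 := by
  unfold Jval
  by_cases h : j ≤ n ∧ (n - j) % 2 = 0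
  · rw [if_pos (by omega)]
    by_cases h2 : j + 2 ≤ n
    · rw [if_pos (by omega), if_pos (by omega)]
      obtain ⟨m', hm'⟩ : ∃ m', (n - j) / 2 = m' + 1 := ⟨(n - j) / 2 - 1, by omega⟩
      have e1 : (n + 1 - (j + 1)) / 2 = m' + 1 := by omega
      have e2 : (n - (j + 2)) / 2 = m' := by omega
      rw [e1, e2, hm']
      have hpascal : (n + 1).choose (m' + 1) = n.choose m' + n.choose (m' + 1) :=
        Nat.choose_succ_succ n m'
      rw [hpascal]
      push_cast
      ring
    · have hnj : n = j := by omega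
      subst hnj
      rw [if_neg (by omega), if_pos (by omega)]
      simp only [Nat.sub_self, Nat.zero_div, Nat.choose_zero_right]
      push_cast
      ring
  · rw [if_neg (by omega)]
    rw [if_neg (by omega), if_neg (by omega)]
    norm_num

lemma cont_ck (n k : ℕ) : Continuous (fun θ : ℝ => Real.cos (k * θ) * Real.cos θ ^ n) := by
  fun_prop

lemma Jint_rec0 (n : ℕ) : Jint (n + 1) 0 = Jint n 1 := by
  unfold Jint
  apply intervalIntegral.integral_congr
  intro θ _
  simp [pow_succ]
  ring

lemma Jint_recS (n j : ℕ) : Jint (n + 1) (j + 1) = (Jint n (j + 2) + Jint n j) / 2 := by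
  unfold Jint
  have key : ∀ θ : ℝ, Real.cos ((j + 1 : ℕ) * θ) * Real.cos θ ^ (n + 1)
      = (Real.cos ((j + 2 : ℕ) * θ) * Real.cos θ ^ n + Real.cos ((j : ℕ) * θ) * Real.cos θ ^ n) / 2 := by
    intro θ
    have h1 : ((j + 2 : ℕ) : ℝ) * θ = ((j + 1 : ℕ) : ℝ) * θ + θ := by push_cast; ring
    have h2 : ((j : ℕ) : ℝ) * θ = ((j + 1 : ℕ) : ℝ) * θ - θ := by push_cast; ring
    rw [h1, h2, Real.cos_add, Real.cos_sub, pow_succ]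
    ring
  rw [intervalIntegral.integral_congr (g := fun θ =>
    (Real.cos ((j + 2 : ℕ) * θ) * Real.cos θ ^ n + Real.cos ((j : ℕ) * θ) * Real.cos θ ^ n) / 2)
    (fun θ _ => key θ)]
  rw [intervalIntegral.integral_div, intervalIntegral.integral_add
    ((cont_ck n (j + 2)).intervalIntegrable _ _) ((cont_ck n j).intervalIntegrable _ _)]

lemma intA (k : ℕ) : (∫ θ in (0:ℝ)..Real.pi, Real.cos (k * θ)) = if k = 0 then Real.pi else 0 := by
  rcases Nat.eq_zero_or_pos k with hk | hk
  · simp [hk]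
  · have hk0 : (k:ℝ) ≠ 0 := Nat.cast_ne_zero.2 hk.ne'
    rw [intervalIntegral.integral_comp_mul_left (fun x => Real.cos x) hk0]
    simp [Real.sin_nat_mul_pi, hk.ne']


lemma Jint_eq_Jval' (n : ℕ) : ∀ k, Jint n k = Jval n k := by
  induction n with
  | zero =>
    intro k
    unfold Jint Jval
    simp only [pow_zero, mul_one]
    rw [intA k]
    rcases Nat.eq_zero_or_pos k with hk | hk
    · subst hk; simp
    · rw [if_neg hk.ne', if_neg (by omega)]
  | succ n ih =>
    intro k
    match k with
    | 0 => rw [Jint_rec0, Jval_rec0, ih]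
    | j + 1 => rw [Jint_recS, Jval_recS, ih, ih]


lemma Jint_eq_Jval (n k : ℕ) :
    (∫ θ in (0:ℝ)..Real.pi, Real.cos ((k:ℝ) * θ) * Real.cos θ ^ n) = Jval n k :=
  Jint_eq_Jval' n k

lemma summable_aux (τ : ℝ) : Summable (fun n : ℕ => τ ^ n / n.factorial) :=
  (NormedSpace.expSeries_div_hasSum_exp τ).summable

lemma hasSum_A (τ : ℝ) (hτ : 0 ≤ τ) (k : ℕ) :
    HasSum (fun n : ℕ => (-τ) ^ n / n.factorial * Jval n k)
      (∫ θ in (0:ℝ)..Real.pi, Real.cos (k * θ) * Real.exp (-τ * Real.cos θ)) := by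
  set fn : ℕ → C(ℝ, ℝ) := fun n =>
    ⟨fun θ => Real.cos (k * θ) * (-τ * Real.cos θ) ^ n / n.factorial, by fun_prop⟩ with hfn
  have hbd : ∀ n, ∀ θ : ℝ, |Real.cos (k * θ) * (-τ * Real.cos θ) ^ n / n.factorial|
      ≤ τ ^ n / n.factorial := by
    intro n θ
    rw [abs_div, abs_of_nonneg (by positivity : (0:ℝ) ≤ (n.factorial : ℝ)), abs_mul, abs_pow]
    have h1 : |Real.cos (k * θ)| ≤ 1 := abs_cos_le_one _
    have h2 : |(-τ) * Real.cos θ| ≤ τ := by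
      rw [abs_mul, abs_neg, abs_of_nonneg hτ]
      calc τ * |Real.cos θ| ≤ τ * 1 := by gcongr; exact abs_cos_le_one _
        _ = τ := mul_one τ
    have hmul : |Real.cos (k * θ)| * |(-τ) * Real.cos θ| ^ n ≤ τ ^ n := by
      calc |Real.cos (k * θ)| * |(-τ) * Real.cos θ| ^ n
          ≤ 1 * τ ^ n :=
            mul_le_mul h1 (pow_le_pow_left₀ (abs_nonneg _) h2 n)
              (pow_nonneg (abs_nonneg _) n) one_pos.le
        _ = τ ^ n := one_mul _
    gcongr
  have hnorm : ∀ n, ‖(fn n).restrict (⟨Set.uIcc (0:ℝ) Real.pi, isCompact_uIcc⟩ : TopologicalSpace.Compacts ℝ)‖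
      ≤ τ ^ n / n.factorial := by
    intro n
    rw [ContinuousMap.norm_le _ (by positivity)]
    rintro ⟨θ, hθ⟩
    simp only [ContinuousMap.restrict_apply, hfn, ContinuousMap.coe_mk, Real.norm_eq_abs]
    exact hbd n θ
  have hsum : Summable fun n : ℕ =>
      ‖(fn n).restrict (⟨Set.uIcc (0:ℝ) Real.pi, isCompact_uIcc⟩ : TopologicalSpace.Compacts ℝ)‖ :=
    Summable.of_nonneg_of_le (fun n => norm_nonneg _) hnorm (summable_aux τ)
  have key := intervalIntegral.hasSum_intervalIntegral_of_summable_norm (a := 0) (b := Real.pi) hsum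
  -- identify the tsum with the exponential
  have htsum : ∀ θ : ℝ, ∑' n, (fn n) θ = Real.cos (k * θ) * Real.exp (-τ * Real.cos θ) := by
    intro θ
    have h := (NormedSpace.expSeries_div_hasSum_exp (-τ * Real.cos θ)).mul_left (Real.cos (k * θ))
    rw [← Real.exp_eq_exp_ℝ] at h
    have : (fun n : ℕ => (fn n) θ) = fun n : ℕ =>
        Real.cos (k * θ) * ((-τ * Real.cos θ) ^ n / n.factorial) := by
      funext n; simp [hfn, mul_div_assoc]
    rw [this]
    exact h.tsum_eq
  have hint : ∀ n, (∫ θ in (0:ℝ)..Real.pi, (fn n) θ) = (-τ) ^ n / n.factorial * Jval n k := by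
    intro n
    have : ∀ θ : ℝ, (fn n) θ = (-τ) ^ n / n.factorial * (Real.cos ((k:ℝ) * θ) * Real.cos θ ^ n) := by
      intro θ; simp only [hfn, ContinuousMap.coe_mk, mul_pow]; ring
    rw [intervalIntegral.integral_congr (fun θ _ => this θ), intervalIntegral.integral_const_mul,
      Jint_eq_Jval]
  have := key
  rw [intervalIntegral.integral_congr (fun θ _ => htsum θ)] at this
  convert this using 1
  · rfl
  · funext n
    exact (hint n).symm

lemma Jval_nonneg (n k : ℕ) : 0 ≤ Jval n k := by
  unfold Jval; split
  · positivity
  · exact le_refl 0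

lemma choose_le_two_pow (n m : ℕ) : n.choose m ≤ 2 ^ n := by
  rcases le_or_gt m n with h | h
  · calc n.choose m ≤ ∑ j ∈ Finset.range (n + 1), n.choose j :=
        Finset.single_le_sum (fun j _ => Nat.zero_le _) (Finset.mem_range.2 (by omega))
      _ = 2 ^ n := Nat.sum_range_choose n
  · rw [Nat.choose_eq_zero_of_lt h]; exact Nat.zero_le _

lemma Jval_le_pi (n k : ℕ) : Jval n k ≤ Real.pi := by
  unfold Jval; split
  · calc Real.pi / 2 ^ n * (n.choose ((n - k) / 2) : ℝ)
        ≤ Real.pi / 2 ^ n * (2 ^ n : ℝ) := by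
          gcongr
          exact_mod_cast choose_le_two_pow n _
      _ = Real.pi := by field_simp
  · exact Real.pi_pos.le

lemma nat_key (k i : ℕ) : (k + 2 * i).choose i * (k.factorial * (2 * i).factorial)
    ≤ (k + 2 * i).factorial * 4 ^ i := by
  have h1 : (2 * i).factorial = (2 * i).choose i * i.factorial * i.factorial := by
    have h := Nat.choose_mul_factorial_mul_factorial (by omega : i ≤ 2 * i)
    rw [show 2 * i - i = i from by omega] at h
    exact h.symm
  have h2 : (2 * i).choose i ≤ 4 ^ i := by
    calc (2 * i).choose i ≤ (2 * i + 1).choose i := Nat.choose_le_choose i (by omega)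
      _ ≤ 4 ^ i := Nat.choose_middle_le_pow i
  have h3 : i.factorial * k.factorial ≤ (k + i).factorial := by
    have := Nat.factorial_mul_factorial_dvd_factorial_add i k
    exact Nat.le_of_dvd (Nat.factorial_pos _) (by rwa [Nat.add_comm i k] at this)
  have h4 : (k + 2 * i).choose i * i.factorial * (k + i).factorial = (k + 2 * i).factorial := by
    have h := Nat.choose_mul_factorial_mul_factorial (by omega : i ≤ k + 2 * i)
    rw [show k + 2 * i - i = k + i from by omega] at h
    exact h
  calc (k + 2 * i).choose i * (k.factorial * (2 * i).factorial)
      = (k + 2 * i).choose i * (k.factorial * ((2 * i).choose i * i.factorial * i.factorial)) := by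
        rw [← h1]
    _ ≤ (k + 2 * i).choose i * (k.factorial * (4 ^ i * i.factorial * i.factorial)) := by
        have : (2 * i).choose i * i.factorial * i.factorial ≤ 4 ^ i * i.factorial * i.factorial := by
          exact Nat.mul_le_mul_right _ (Nat.mul_le_mul_right _ h2)
        exact Nat.mul_le_mul_left _ (Nat.mul_le_mul_left _ this)
    _ = (k + 2 * i).choose i * i.factorial * (i.factorial * k.factorial) * 4 ^ i := by ring
    _ ≤ (k + 2 * i).choose i * i.factorial * (k + i).factorial * 4 ^ i := by
        exact Nat.mul_le_mul_right _ (Nat.mul_le_mul_left _ h3)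
    _ = (k + 2 * i).factorial * 4 ^ i := by rw [h4]

lemma hnat (k i : ℕ) : (k + 2 * i).choose i * (2 ^ k * (k.factorial * (2 * i).factorial))
    ≤ (k + 2 * i).factorial * 2 ^ (k + 2 * i) := by
  have h := nat_key k i
  have h2 : (2:ℕ) ^ (k + 2 * i) = 2 ^ k * 4 ^ i := by
    rw [pow_add, pow_mul]; norm_num
  calc (k + 2 * i).choose i * (2 ^ k * (k.factorial * (2 * i).factorial))
      = 2 ^ k * ((k + 2 * i).choose i * (k.factorial * (2 * i).factorial)) := by ring
    _ ≤ 2 ^ k * ((k + 2 * i).factorial * 4 ^ i) := Nat.mul_le_mul_left _ h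
    _ = (k + 2 * i).factorial * 2 ^ (k + 2 * i) := by rw [h2]; ring

lemma frac_le (k i : ℕ) : (((k + 2 * i).choose i : ℝ)) / (((k + 2 * i).factorial : ℝ) * 2 ^ (k + 2 * i))
    ≤ 1 / (2 ^ k * (k.factorial : ℝ) * ((2 * i).factorial : ℝ)) := by
  rw [div_le_div_iff₀ (by positivity) (by positivity)]
  rw [one_mul]
  have h' : ((k + 2 * i).choose i : ℝ) * (2 ^ k * ((k.factorial : ℝ) * ((2 * i).factorial : ℝ)))
      ≤ ((k + 2 * i).factorial : ℝ) * 2 ^ (k + 2 * i) := by exact_mod_cast hnat k i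
  have e : ((k + 2 * i).choose i : ℝ) * (2 ^ k * (k.factorial : ℝ) * ((2 * i).factorial : ℝ))
      = ((k + 2 * i).choose i : ℝ) * (2 ^ k * ((k.factorial : ℝ) * ((2 * i).factorial : ℝ))) := by ring
  rw [e]
  exact h'

lemma term_bound (τ : ℝ) (hτ : 0 ≤ τ) (k i : ℕ) :
    τ ^ (k + 2 * i) / ((k + 2 * i).factorial : ℝ) * Jval (k + 2 * i) k
      ≤ Real.pi * (τ / 2) ^ k / k.factorial * (τ ^ (2 * i) / ((2 * i).factorial : ℝ)) := by
  rw [Jval, if_pos ⟨by omega, by omega⟩, show (k + 2 * i - k) / 2 = i from by omega]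
  have heq : τ ^ (k + 2 * i) / ((k + 2 * i).factorial : ℝ) *
      (Real.pi / 2 ^ (k + 2 * i) * ((k + 2 * i).choose i : ℝ))
      = (Real.pi * (τ ^ k * τ ^ (2 * i))) *
        (((k + 2 * i).choose i : ℝ) / (((k + 2 * i).factorial : ℝ) * 2 ^ (k + 2 * i))) := by
    rw [pow_add]; ring
  rw [heq, div_pow]
  calc (Real.pi * (τ ^ k * τ ^ (2 * i))) *
        (((k + 2 * i).choose i : ℝ) / (((k + 2 * i).factorial : ℝ) * 2 ^ (k + 2 * i)))
      ≤ (Real.pi * (τ ^ k * τ ^ (2 * i))) *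
        (1 / (2 ^ k * (k.factorial : ℝ) * ((2 * i).factorial : ℝ))) := by
        apply mul_le_mul_of_nonneg_left (frac_le k i) (by positivity)
    _ = Real.pi * (τ ^ k / 2 ^ k) / k.factorial * (τ ^ (2 * i) / ((2 * i).factorial : ℝ)) := by
        ring


lemma tsum_bound (τ : ℝ) (hτ : 0 ≤ τ) (k : ℕ) :
    ∑' n, (τ ^ n / (n.factorial : ℝ) * Jval n k)
      ≤ Real.pi * (τ / 2) ^ k / k.factorial * Real.cosh τ := by
  have ha_nn : ∀ n : ℕ, 0 ≤ τ ^ n / (n.factorial : ℝ) * Jval n k :=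
    fun n => mul_nonneg (by positivity) (Jval_nonneg n k)
  have hsummable : Summable (fun n : ℕ => τ ^ n / (n.factorial : ℝ) * Jval n k) := by
    apply Summable.of_nonneg_of_le ha_nn (fun n => ?_) ((summable_aux τ).mul_left Real.pi)
    calc τ ^ n / (n.factorial : ℝ) * Jval n k ≤ τ ^ n / (n.factorial : ℝ) * Real.pi :=
          mul_le_mul_of_nonneg_left (Jval_le_pi n k) (by positivity)
      _ = Real.pi * (τ ^ n / n.factorial) := by ring
  have hinj : Function.Injective (fun i : ℕ => k + 2 * i) := fun a b h => by simp only at h; omega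
  have hvanish : ∀ n, n ∉ Set.range (fun i : ℕ => k + 2 * i) →
      τ ^ n / (n.factorial : ℝ) * Jval n k = 0 := by
    intro n hn
    have hcond : ¬(k ≤ n ∧ (n - k) % 2 = 0) := by
      intro ⟨h1, h2⟩
      refine hn ⟨(n - k) / 2, ?_⟩
      show k + 2 * ((n - k) / 2) = n
      omega
    simp only [Jval, if_neg hcond, mul_zero]
  have hre : ∑' n : ℕ, τ ^ n / (n.factorial : ℝ) * Jval n k
      = ∑' i : ℕ, τ ^ (k + 2 * i) / (((k + 2 * i).factorial : ℝ)) * Jval (k + 2 * i) k :=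
    (Function.Injective.tsum_eq hinj (Function.support_subset_iff'.2 hvanish)).symm
  have hb : HasSum (fun i : ℕ => Real.pi * (τ / 2) ^ k / k.factorial * (τ ^ (2 * i) / ((2 * i).factorial : ℝ)))
      (Real.pi * (τ / 2) ^ k / k.factorial * Real.cosh τ) :=
    (Real.hasSum_cosh τ).mul_left _
  have hs2 : Summable (fun i : ℕ => τ ^ (k + 2 * i) / (((k + 2 * i).factorial : ℝ)) * Jval (k + 2 * i) k) := by
    have := hsummable.comp_injective hinj
    exact this
  rw [hre, ← hb.tsum_eq]
  exact Summable.tsum_le_tsum (fun i => term_bound τ hτ k i) hs2 hb.summable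




lemma summable_a (τ : ℝ) (hτ : 0 ≤ τ) (k : ℕ) :
    Summable (fun n : ℕ => τ ^ n / (n.factorial : ℝ) * Jval n k) := by
  apply Summable.of_nonneg_of_le
    (fun n => mul_nonneg (by positivity) (Jval_nonneg n k)) (fun n => ?_)
    ((summable_aux τ).mul_left Real.pi)
  calc τ ^ n / (n.factorial : ℝ) * Jval n k ≤ τ ^ n / (n.factorial : ℝ) * Real.pi :=
        mul_le_mul_of_nonneg_left (Jval_le_pi n k) (by positivity)
    _ = Real.pi * (τ ^ n / n.factorial) := by ring

lemma abs_A_le (τ : ℝ) (hτ : 0 ≤ τ) (k : ℕ) :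
    |∫ θ in (0:ℝ)..Real.pi, Real.cos (k * θ) * Real.exp (-τ * Real.cos θ)|
      ≤ Real.pi * (τ / 2) ^ k / k.factorial * Real.cosh τ := by
  have hA := hasSum_A τ hτ k
  have habs : ∀ n : ℕ, ‖(-τ) ^ n / (n.factorial : ℝ) * Jval n k‖
      = τ ^ n / (n.factorial : ℝ) * Jval n k := by
    intro n
    rw [Real.norm_eq_abs, abs_mul, abs_div, abs_pow, abs_neg, abs_of_nonneg hτ,
      abs_of_nonneg (by positivity : (0:ℝ) ≤ (n.factorial : ℝ)),
      abs_of_nonneg (Jval_nonneg n k)]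
  have hsum_norm : Summable (fun n : ℕ => ‖(-τ) ^ n / (n.factorial : ℝ) * Jval n k‖) := by
    simp only [habs]
    exact summable_a τ hτ k
  calc |∫ θ in (0:ℝ)..Real.pi, Real.cos (k * θ) * Real.exp (-τ * Real.cos θ)|
      = ‖∑' n, ((-τ) ^ n / (n.factorial : ℝ) * Jval n k)‖ := by
        rw [hA.tsum_eq, Real.norm_eq_abs]
    _ ≤ ∑' n, ‖(-τ) ^ n / (n.factorial : ℝ) * Jval n k‖ := norm_tsum_le_tsum_norm hsum_norm
    _ = ∑' n, (τ ^ n / (n.factorial : ℝ) * Jval n k) := by simp only [habs]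
    _ ≤ Real.pi * (τ / 2) ^ k / k.factorial * Real.cosh τ := tsum_bound τ hτ k

theorem stmt_18 (τ : ℝ) (hτ : 0 ≤ τ) (k : ℕ) :
    |chebCoeff τ k| ≤ 2 * (τ / 2) ^ k * Real.exp (-τ) * Real.cosh τ / k.factorial := by
  have hπ : (0:ℝ) < Real.pi := Real.pi_pos
  have hInt : (∫ θ in (0:ℝ)..Real.pi, Real.cos (k * θ) * Real.exp (-τ * (Real.cos θ + 1)))
      = (∫ θ in (0:ℝ)..Real.pi, Real.cos (k * θ) * Real.exp (-τ * Real.cos θ)) * Real.exp (-τ) := by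
    rw [← intervalIntegral.integral_mul_const]
    apply intervalIntegral.integral_congr
    intro θ _
    show Real.cos (k * θ) * Real.exp (-τ * (Real.cos θ + 1))
      = Real.cos (k * θ) * Real.exp (-τ * Real.cos θ) * Real.exp (-τ)
    rw [show -τ * (Real.cos θ + 1) = -τ * Real.cos θ + -τ by ring, Real.exp_add]
    ring
  rw [chebCoeff, hInt]
  rw [abs_mul, abs_mul, abs_of_nonneg (by positivity : (0:ℝ) ≤ 2 / Real.pi),
    abs_of_pos (Real.exp_pos _)]
  calc 2 / Real.pi * (|∫ θ in (0:ℝ)..Real.pi, Real.cos (k * θ) * Real.exp (-τ * Real.cos θ)| * Real.exp (-τ))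
      ≤ 2 / Real.pi * ((Real.pi * (τ / 2) ^ k / k.factorial * Real.cosh τ) * Real.exp (-τ)) := by
        gcongr
        exact abs_A_le τ hτ k
    _ = 2 * (τ / 2) ^ k * Real.exp (-τ) * Real.cosh τ / k.factorial := by
        field_simp
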